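/- With β=γ=0, the point G₁₁₁ with S = Δ_μ/Δ_α, I₁ = (rA₂/Δ_α)(1 - η₂*(1 - Δ_μ/(KΔ_α))), I₂ = (rA₁/Δ_α)(η₁*(1 - Δ_μ/(KΔ_α)) - 1), I₁₂ = rA₃/Δ_α is an equilibrium of the coinfection system, where A₃ = α₁α₂(σ₂-σ₁)/r. -/

import Mathlib

set_option maxHeartbeats 1000000 in
/-- with β=γ=0, the point G₁₁₁ is an equilibrium of the system. -/
theorem stmt_8 (r K a1 a2 a3 m1 m2 m3 e1 e2 s1 s2 s3 A1 A2 A3 E1 E2 Da Dm S I1 I2 I12 : ℝ)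
    (hr : 0 < r) (hK : 0 < K) (ha1 : 0 < a1) (ha2 : 0 < a2) (ha3 : 0 < a3)
    (hm1 : 0 < m1) (hm2 : 0 < m2) (hm3 : 0 < m3) (he1 : 0 < e1) (he2 : 0 < e2)
    (hs1 : s1 = m1 / a1) (hs2 : s2 = m2 / a2) (hs3 : s3 = m3 / a3)
    (h12 : s1 < s2) (h23 : s2 < s3)
    (hA1 : A1 = a1 * a3 * (s3 - s1) / r) (hA2 : A2 = a2 * a3 * (s3 - s2) / r)
    (hA3 : A3 = a1 * a2 * (s2 - s1) / r)
    (hE1 : E1 = e1 / A1) (hE2 : E2 = e2 / A2)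
    (hDa : Da = a2 * e1 - a1 * e2) (hDm : Dm = m2 * e1 - m1 * e2)
    (hDane : Da ≠ 0)
    (hS : S = Dm / Da)
    (hI1 : I1 = (r * A2 / Da) * (1 - E2 * (1 - Dm / (K * Da))))
    (hI2 : I2 = (r * A1 / Da) * (E1 * (1 - Dm / (K * Da)) - 1))
    (hI12 : I12 = r * A3 / Da) :
    (r * (1 - S / K) - a1 * I1 - a2 * I2 - a3 * I12) * S = 0 ∧
    (a1 * S - e1 * I12 - m1) * I1 = 0 ∧
    (a2 * S - e2 * I12 - m2) * I2 = 0 ∧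
    (a3 * S + e1 * I1 + e2 * I2 - m3) * I12 = 0 := by
  have hrne : r ≠ 0 := hr.ne'
  have hKne : K ≠ 0 := hK.ne'
  have hA1p : 0 < A1 := by rw [hA1]; exact div_pos (mul_pos (mul_pos ha1 ha3) (by linarith)) hr
  have hA2p : 0 < A2 := by rw [hA2]; exact div_pos (mul_pos (mul_pos ha2 ha3) (by linarith)) hr
  have hA1ne : A1 ≠ 0 := hA1p.ne'
  have hA2ne : A2 ≠ 0 := hA2p.ne'
  have he1' : E1 * A1 = e1 := by rw [hE1]; field_simp
  have he2' : E2 * A2 = e2 := by rw [hE2]; field_simp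
  have hrA1 : r * A1 = a1 * m3 - a3 * m1 := by
    rw [hA1, hs1, hs3]; field_simp
  have hrA2 : r * A2 = a2 * m3 - a3 * m2 := by
    rw [hA2, hs2, hs3]; field_simp
  have hrA3 : r * A3 = a1 * m2 - a2 * m1 := by
    rw [hA3, hs1, hs2]; field_simp
  have hkey : a2 * A1 - a1 * A2 = a3 * A3 := by
    have h : r * (a2 * A1 - a1 * A2 - a3 * A3) = 0 := by
      linear_combination a2 * hrA1 - a1 * hrA2 - a3 * hrA3
    have := (mul_eq_zero.mp h).resolve_left hrne
    linarith
  have hc : Da * Da⁻¹ = 1 := mul_inv_cancel₀ hDane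
  refine ⟨?_, ?_, ?_, ?_⟩
  · have h1 : r * (1 - S / K) - a1 * I1 - a2 * I2 - a3 * I12 = 0 := by
      rw [hS, hI1, hI2, hI12]
      linear_combination (r/Da)*hkey + (r*(1 - Dm/(K*Da))/Da)*(hDa - a2*he1' + a1*he2') - (r - r*Dm/(Da*K))*hc
    rw [h1, zero_mul]
  · have h1 : a1 * S - e1 * I12 - m1 = 0 := by
      rw [hS, hI12]
      linear_combination (1/Da)*(a1*hDm - m1*hDa - e1*hrA3) + m1*hc
    rw [h1, zero_mul]
  · have h1 : a2 * S - e2 * I12 - m2 = 0 := by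
      rw [hS, hI12]
      linear_combination (1/Da)*(a2*hDm - m2*hDa - e2*hrA3) + m2*hc
    rw [h1, zero_mul]
  · have h1 : a3 * S + e1 * I1 + e2 * I2 - m3 = 0 := by
      rw [hS, hI1, hI2]
      linear_combination (1/Da)*(a3*hDm + e1*hrA2 - e2*hrA1 - m3*hDa) + (r*(1 - Dm/(K*Da))/Da)*(e2*he1' - e1*he2') + m3*hc
    rw [h1, zero_mul]
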